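/- The map sending a binary word w in the alphabet {1,2} with digit sum N to the set of all sums of suffixes of w whose first digit is 1 is a bijection between such binary words and Fibonacci sets of rank N. -/

import Mathlib

/-- `S` is a Fibonacci set of rank `N`: a subset of `{1,…,N}` whose cardinality has the
same parity as `N`, and whose `ℓ`-th smallest element (1-indexed) has the same parity as `ℓ`. -/
def IsFibSet (N : ℕ) (S : Finset ℕ) : Prop :=
  S ⊆ Finset.Icc 1 N ∧ S.card % 2 = N % 2 ∧
    ∀ i < S.card, ((S.sort (· ≤ ·)).getD i 0) % 2 = (i + 1) % 2

/-- The set of sums of the suffixes of the word `w` whose first digit is `1`. -/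
def suffixSums (w : List ℕ) : Finset ℕ :=
  ((Finset.range w.length).filter (fun i => w.getD i 0 = 1)).image (fun i => (w.drop i).sum)

/- ### Auxiliary lemmas -/

lemma sort_insert_top {S : Finset ℕ} {a : ℕ} (h : ∀ x ∈ S, x < a) :
    (insert a S).sort (· ≤ ·) = S.sort (· ≤ ·) ++ [a] := by
  have ha : a ∉ S := fun hm => lt_irrefl a (h a hm)
  have hperm : ((insert a S).sort (· ≤ ·)).Perm (S.sort (· ≤ ·) ++ [a]) :=
    ((Finset.sort_perm_toList _ _).trans ((Finset.toList_insert ha).trans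
      (((Finset.sort_perm_toList S (· ≤ ·)).symm.cons a).trans
        (List.perm_append_singleton a _).symm)))
  refine List.Perm.eq_of_pairwise' (Finset.pairwise_sort _ _) ?_ hperm
  · rw [List.pairwise_append]
    refine ⟨Finset.pairwise_sort _ _, List.pairwise_singleton _ a, ?_⟩
    intro x hx y hy
    rw [List.mem_singleton] at hy
    subst hy
    exact le_of_lt (h x ((Finset.mem_sort _).1 hx))

lemma isFibSet_empty_even {N : ℕ} (h : N % 2 = 0) : IsFibSet N ∅ := by
  refine ⟨Finset.empty_subset _, by simpa using h.symm, ?_⟩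
  intro i hi
  simp at hi

lemma isFibSet_add_two {N : ℕ} {S : Finset ℕ} (h : IsFibSet N S) : IsFibSet (N + 2) S := by
  obtain ⟨h1, h2, h3⟩ := h
  refine ⟨h1.trans (Finset.Icc_subset_Icc le_rfl (by omega)), by omega, h3⟩

lemma isFibSet_insert {N : ℕ} {S : Finset ℕ} (h : IsFibSet N S) :
    IsFibSet (N + 1) (insert (N + 1) S) := by
  obtain ⟨h1, h2, h3⟩ := h
  have hlt : ∀ x ∈ S, x < N + 1 := by
    intro x hx
    have := h1 hx
    rw [Finset.mem_Icc] at this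
    omega
  have hnm : N + 1 ∉ S := fun hm => lt_irrefl _ (hlt _ hm)
  have hsort := sort_insert_top hlt
  have hcard : (insert (N + 1) S).card = S.card + 1 := Finset.card_insert_of_notMem hnm
  refine ⟨?_, by omega, ?_⟩
  · intro x hx
    rcases Finset.mem_insert.1 hx with rfl | hx
    · simp [Finset.mem_Icc]
    · have := h1 hx
      rw [Finset.mem_Icc] at this ⊢
      omega
  · intro i hi
    rw [hcard] at hi
    rw [hsort]
    have hlen : (S.sort (· ≤ ·)).length = S.card := Finset.length_sort _
    rcases Nat.lt_or_ge i S.card with hlt' | hge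
    · rw [List.getD_append _ _ _ _ (by omega)]
      exact h3 i hlt'
    · have hieq : i = S.card := by omega
      subst hieq
      rw [List.getD_append_right _ _ _ _ (by omega)]
      simp only [hlen, Nat.sub_self, List.getD_cons_zero]
      omega

lemma isFibSet_erase {N : ℕ} {S : Finset ℕ} (h : IsFibSet N S) (hN : N ∈ S) :
    IsFibSet (N - 1) (S.erase N) := by
  obtain ⟨h1, h2, h3⟩ := h
  have hN1 : 1 ≤ N := by
    have := h1 hN; rw [Finset.mem_Icc] at this; omega
  have hlt : ∀ x ∈ S.erase N, x < N := by
    intro x hx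
    have hne := Finset.ne_of_mem_erase hx
    have := h1 (Finset.mem_of_mem_erase hx)
    rw [Finset.mem_Icc] at this
    omega
  set T := S.erase N with hT
  have hins : insert N T = S := Finset.insert_erase hN
  have hsort : S.sort (· ≤ ·) = T.sort (· ≤ ·) ++ [N] := by
    rw [← hins]; exact sort_insert_top hlt
  have hcard : S.card = T.card + 1 := by
    rw [← hins, Finset.card_insert_of_notMem (Finset.notMem_erase _ _)]
  refine ⟨?_, by omega, ?_⟩
  · intro x hx
    have := hlt x hx
    have := h1 (Finset.mem_of_mem_erase hx)
    rw [Finset.mem_Icc] at this ⊢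
    omega
  · intro i hi
    have := h3 i (by omega)
    rw [hsort, List.getD_append _ _ _ _ (by rw [Finset.length_sort]; omega)] at this
    exact this

lemma isFibSet_not_mem {N : ℕ} {S : Finset ℕ} (h : IsFibSet N S) (hN : N ∉ S) (h1 : 1 ≤ N) :
    ∃ M, N = M + 2 ∧ IsFibSet M S := by
  obtain ⟨hsub, hc, hp⟩ := h
  -- First: N - 1 ∉ S
  have hN1 : N - 1 ∉ S := by
    intro hmem
    have hne : S.Nonempty := ⟨N - 1, hmem⟩
    have hcpos : 1 ≤ S.card := Finset.card_pos.2 hne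
    set l := S.sort (· ≤ ·) with hl
    have hlen : l.length = S.card := Finset.length_sort _
    have hml : N - 1 ∈ l := (Finset.mem_sort _).2 hmem
    obtain ⟨i, hi, hig⟩ := List.mem_iff_getElem.1 hml
    have hlast : l[S.card - 1]'(by omega) ∈ S := (Finset.mem_sort _).1 (List.getElem_mem _)
    have hle : l[i]'hi ≤ l[S.card - 1]'(by omega) := by
      apply (Finset.pairwise_sort S (· ≤ ·)).rel_get_of_le
      simp only [Fin.mk_le_mk]
      omega
    have hub : l[S.card - 1]'(by omega) ≤ N := by
      have := hsub hlast; rw [Finset.mem_Icc] at this; omega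
    have hneN : l[S.card - 1]'(by omega) ≠ N := fun he => hN (he ▸ hlast)
    have heq : l[S.card - 1]'(by omega) = N - 1 := by omega
    have hp1 := hp (S.card - 1) (by omega)
    rw [List.getD_eq_getElem _ _ (by omega), heq] at hp1
    omega
  have hN2 : 2 ≤ N := by
    rcases Nat.lt_or_ge N 2 with hlt | hge
    · exfalso
      have hNe : N = 1 := by omega
      subst hNe
      have : S = ∅ := by
        apply Finset.eq_empty_of_forall_notMem
        intro x hx
        have := hsub hx
        rw [Finset.mem_Icc] at this
        have : x = 1 := by omega
        exact hN (this ▸ hx)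
      rw [this] at hc
      simp at hc
    · exact hge
  refine ⟨N - 2, by omega, ?_, by omega, hp⟩
  intro x hx
  have hxb := hsub hx
  rw [Finset.mem_Icc] at hxb ⊢
  have hx1 : x ≠ N := fun he => hN (he ▸ hx)
  have hx2 : x ≠ N - 1 := fun he => hN1 (he ▸ hx)
  omega

/- ### suffixSums lemmas -/

lemma suffixSums_nil : suffixSums [] = ∅ := by
  simp [suffixSums]

lemma le_sum_of_mem_suffixSums {w : List ℕ} {x : ℕ} (hx : x ∈ suffixSums w) : x ≤ w.sum := by
  simp only [suffixSums, Finset.mem_image, Finset.mem_filter, Finset.mem_range] at hx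
  obtain ⟨i, _, rfl⟩ := hx
  conv_rhs => rw [← List.take_append_drop i w]
  rw [List.sum_append]
  omega

lemma mem_suffixSums_cons {d x : ℕ} {w : List ℕ} :
    x ∈ suffixSums (d :: w) ↔ (d = 1 ∧ x = d + w.sum) ∨ x ∈ suffixSums w := by
  simp only [suffixSums, Finset.mem_image, Finset.mem_filter, Finset.mem_range, List.length_cons]
  constructor
  · rintro ⟨i, ⟨hi, hdig⟩, hsum⟩
    cases i with
    | zero =>
      left
      simp only [List.getD_cons_zero] at hdig
      simp only [List.drop_zero, List.sum_cons] at hsum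
      exact ⟨hdig, hsum.symm⟩
    | succ j =>
      right
      refine ⟨j, ⟨by omega, by simpa using hdig⟩, by simpa using hsum⟩
  · rintro (⟨hd1, hx⟩ | ⟨j, ⟨hj, hdig⟩, hsum⟩)
    · exact ⟨0, ⟨by omega, by simp [hd1]⟩, by simp [hx]⟩
    · exact ⟨j + 1, ⟨by omega, by simpa using hdig⟩, by simpa using hsum⟩

lemma suffixSums_cons_one {w : List ℕ} :
    suffixSums (1 :: w) = insert (1 + w.sum) (suffixSums w) := by
  ext x
  rw [mem_suffixSums_cons, Finset.mem_insert]
  constructor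
  · rintro (⟨_, rfl⟩ | h) <;> [left; right] <;> simp_all
  · rintro (rfl | h) <;> [exact Or.inl ⟨rfl, rfl⟩; exact Or.inr h]

lemma suffixSums_cons_two {w : List ℕ} :
    suffixSums (2 :: w) = suffixSums w := by
  ext x
  rw [mem_suffixSums_cons]
  constructor
  · rintro (⟨h, _⟩ | h)
    · omega
    · exact h
  · exact fun h => Or.inr h

lemma one_add_sum_not_mem {w : List ℕ} : 1 + w.sum ∉ suffixSums w := by
  intro hmem
  have := le_sum_of_mem_suffixSums hmem
  omega

/- ### The three parts of the bijection -/

lemma suffixSums_isFibSet :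
    ∀ w : List ℕ, (∀ d ∈ w, d = 1 ∨ d = 2) → IsFibSet w.sum (suffixSums w) := by
  intro w
  induction w with
  | nil => intro _; rw [suffixSums_nil]; exact isFibSet_empty_even (by simp)
  | cons d t ih =>
    intro hd
    have ht := ih (fun x hx => hd x (List.mem_cons_of_mem _ hx))
    rcases hd d (List.mem_cons_self) with rfl | rfl
    · rw [suffixSums_cons_one]
      have := isFibSet_insert ht
      rw [List.sum_cons]
      rw [show (1 + t.sum) = t.sum + 1 by omega]
      exact this
    · rw [suffixSums_cons_two, List.sum_cons, show (2 + t.sum) = t.sum + 2 by omega]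
      exact isFibSet_add_two ht

lemma head_one_iff_sum_mem {d : ℕ} {w : List ℕ} (hd : d = 1 ∨ d = 2) :
    (d :: w).sum ∈ suffixSums (d :: w) ↔ d = 1 := by
  rw [List.sum_cons, mem_suffixSums_cons]
  constructor
  · rintro (⟨h, _⟩ | h)
    · exact h
    · have := le_sum_of_mem_suffixSums h
      omega
  · intro h
    exact Or.inl ⟨h, rfl⟩

lemma suffixSums_injective :
    ∀ w₁ w₂ : List ℕ, (∀ d ∈ w₁, d = 1 ∨ d = 2) → (∀ d ∈ w₂, d = 1 ∨ d = 2) →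
      w₁.sum = w₂.sum → suffixSums w₁ = suffixSums w₂ → w₁ = w₂ := by
  intro w₁
  induction w₁ with
  | nil =>
    intro w₂ _ h2 hsum _
    cases w₂ with
    | nil => rfl
    | cons d t =>
      exfalso
      have hd := h2 d (List.mem_cons_self)
      simp only [List.sum_nil, List.sum_cons] at hsum
      omega
  | cons d t ih =>
    intro w₂ h1 h2 hsum hS
    cases w₂ with
    | nil =>
      exfalso
      have hd := h1 d (List.mem_cons_self)
      simp only [List.sum_nil, List.sum_cons] at hsum
      omega
    | cons d' t' =>
      have hd := h1 d (List.mem_cons_self)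
      have hd' := h2 d' (List.mem_cons_self)
      have ht1 : ∀ x ∈ t, x = 1 ∨ x = 2 := fun x hx => h1 x (List.mem_cons_of_mem _ hx)
      have ht2 : ∀ x ∈ t', x = 1 ∨ x = 2 := fun x hx => h2 x (List.mem_cons_of_mem _ hx)
      have hdd : d = d' := by
        have e1 := head_one_iff_sum_mem (w := t) hd
        have e2 := head_one_iff_sum_mem (w := t') hd'
        rw [hS, hsum] at e1
        rw [e2] at e1
        omega
      subst hdd
      have hts : t.sum = t'.sum := by
        simp only [List.sum_cons] at hsum
        omega
      rcases hd with rfl | rfl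
      · rw [suffixSums_cons_one, suffixSums_cons_one, hts] at hS
        have ht : suffixSums t = suffixSums t' := by
          have e1 : (insert (1 + t'.sum) (suffixSums t)).erase (1 + t'.sum) = suffixSums t := by
            rw [Finset.erase_insert (hts ▸ one_add_sum_not_mem)]
          have e2 : (insert (1 + t'.sum) (suffixSums t')).erase (1 + t'.sum) = suffixSums t' := by
            rw [Finset.erase_insert one_add_sum_not_mem]
          rw [← e1, ← e2, hS]
        rw [ih t' ht1 ht2 hts ht]
      · rw [suffixSums_cons_two, suffixSums_cons_two] at hS
        rw [ih t' ht1 ht2 hts hS]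

lemma fibSet_surj :
    ∀ N : ℕ, ∀ S : Finset ℕ, IsFibSet N S →
      ∃ w : List ℕ, (∀ d ∈ w, d = 1 ∨ d = 2) ∧ w.sum = N ∧ suffixSums w = S := by
  intro N
  induction N using Nat.strong_induction_on with
  | _ N ih =>
    intro S hS
    rcases Nat.eq_zero_or_pos N with rfl | h1
    · have hE : S = ∅ := by
        apply Finset.eq_empty_of_forall_notMem
        intro x hx
        have := hS.1 hx
        rw [Finset.mem_Icc] at this
        omega
      exact ⟨[], by simp, by simp, by rw [suffixSums_nil, hE]⟩
    · by_cases hN : N ∈ S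
      · have h' := isFibSet_erase hS hN
        obtain ⟨w, hw1, hw2, hw3⟩ := ih (N - 1) (by omega) _ h'
        refine ⟨1 :: w, ?_, ?_, ?_⟩
        · intro x hx
          rcases List.mem_cons.1 hx with rfl | hx
          · exact Or.inl rfl
          · exact hw1 x hx
        · simp only [List.sum_cons]; omega
        · rw [suffixSums_cons_one, hw3, hw2]
          rw [show (1 + (N - 1)) = N by omega]
          exact Finset.insert_erase hN
      · obtain ⟨M, hM, h'⟩ := isFibSet_not_mem hS hN h1
        obtain ⟨w, hw1, hw2, hw3⟩ := ih M (by omega) _ h'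
        refine ⟨2 :: w, ?_, ?_, hw3 ▸ suffixSums_cons_two⟩
        · intro x hx
          rcases List.mem_cons.1 hx with rfl | hx
          · exact Or.inr rfl
          · exact hw1 x hx
        · simp only [List.sum_cons]; omega

/-- The map sending a binary word in the alphabet `{1,2}` with digit sum `N` to the set of
sums of its suffixes whose first digit is `1` is a bijection onto the Fibonacci sets of
rank `N`. -/
theorem fibWord_bijOn (N : ℕ) :
    Set.BijOn suffixSums
      {w : List ℕ | (∀ d ∈ w, d = 1 ∨ d = 2) ∧ w.sum = N}
      {S : Finset ℕ | IsFibSet N S} := by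
  refine ⟨?_, ?_, ?_⟩
  · rintro w ⟨hd, hsum⟩
    exact hsum ▸ suffixSums_isFibSet w hd
  · rintro w₁ ⟨hd₁, hs₁⟩ w₂ ⟨hd₂, hs₂⟩ heq
    exact suffixSums_injective w₁ w₂ hd₁ hd₂ (hs₁.trans hs₂.symm) heq
  · rintro S hS
    obtain ⟨w, hw1, hw2, hw3⟩ := fibSet_surj N S hS
    exact ⟨w, ⟨hw1, hw2⟩, hw3⟩
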